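/- Let G be a toroidal graph with minimum counterexample property: G has no proper odd colouring with at most 9 colours, but every toroidal graph with fewer vertices does. Then G has no vertex of degree 1 or 3. -/

import Mathlib

open scoped Classical
open Finset

/-- The colouring `c` is *odd at* `v`: some colour appears an odd number of
times in the neighbourhood of `v`. -/
def SimpleGraph.IsOddAt {V α : Type} [Fintype V] (G : SimpleGraph V)
    (c : V → α) (v : V) : Prop :=
  ∃ a : α, Odd ((G.neighborFinset v).filter fun w => c w = a).card

/-- `c` is a proper odd vertex-colouring of `G`. -/
def SimpleGraph.IsProperOdd {V α : Type} [Fintype V] (G : SimpleGraph V)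
    (c : V → α) : Prop :=
  (∀ u w : V, G.Adj u w → c u ≠ c w) ∧
  ∀ v : V, 0 < G.degree v → G.IsOddAt c v

/-- `G` has a proper odd colouring with at most 9 colours. -/
def SimpleGraph.HasNice {V : Type} [Fintype V] (G : SimpleGraph V) : Prop :=
  ∃ c : V → Fin 9, G.IsProperOdd c

lemma extend_nice {V : Type} [Fintype V] [DecidableEq V] (G : SimpleGraph V) (v : V)
    (hodd : Odd (G.degree v)) (hle : G.degree v ≤ 3)
    (hH : (G.induce {x : V | x ≠ v}).HasNice) : G.HasNice := by
  classical
  obtain ⟨c, hc1, hc2⟩ := hH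
  set H := G.induce {x : V | x ≠ v} with hHdef
  set N := G.neighborFinset v with hNdef
  have hmemN : ∀ u, u ∈ N → u ≠ v := by
    intro u hu
    rw [hNdef, SimpleGraph.mem_neighborFinset] at hu
    exact hu.ne'
  -- the odd colour function
  let oc : {x : V // x ≠ v} → Fin 9 := fun u =>
    if h : H.IsOddAt c u then h.choose else 0
  let F : Finset (Fin 9) :=
    (N.attach.image fun u => c ⟨u.1, hmemN u.1 u.2⟩) ∪
    (N.attach.image fun u => oc ⟨u.1, hmemN u.1 u.2⟩)
  have hNcard : N.card = G.degree v := (G.card_neighborFinset_eq_degree v)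
  have hFcard : F.card < 9 := by
    have h1 : (N.attach.image fun u => c ⟨u.1, hmemN u.1 u.2⟩).card ≤ 3 := by
      refine le_trans (Finset.card_image_le) ?_
      rw [Finset.card_attach, hNcard]; exact hle
    have h2 : (N.attach.image fun u => oc ⟨u.1, hmemN u.1 u.2⟩).card ≤ 3 := by
      refine le_trans (Finset.card_image_le) ?_
      rw [Finset.card_attach, hNcard]; exact hle
    calc F.card ≤ _ + _ := Finset.card_union_le _ _
    _ < 9 := by omega
  obtain ⟨b, hb⟩ : ∃ b : Fin 9, b ∉ F := by
    by_contra h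
    push_neg at h
    have : F = Finset.univ := Finset.eq_univ_iff_forall.mpr h
    rw [this, Finset.card_univ] at hFcard
    simp at hFcard
  -- extended colouring
  let c' : V → Fin 9 := fun x => if h : x = v then b else c ⟨x, h⟩
  have hc'v : c' v = b := by simp [c']
  have hc'ne : ∀ (x : V) (h : x ≠ v), c' x = c ⟨x, h⟩ := by
    intro x h; simp [c', h]
  -- colours of neighbours are in F
  have hcolF : ∀ u (hu : u ∈ N), c ⟨u, hmemN u hu⟩ ∈ F := by
    intro u hu
    exact Finset.mem_union_left _ (Finset.mem_image.mpr ⟨⟨u, hu⟩, Finset.mem_attach _ _, rfl⟩)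
  have hocF : ∀ u (hu : u ∈ N), oc ⟨u, hmemN u hu⟩ ∈ F := by
    intro u hu
    exact Finset.mem_union_right _ (Finset.mem_image.mpr ⟨⟨u, hu⟩, Finset.mem_attach _ _, rfl⟩)
  -- adjacency in H
  have hHadj : ∀ (x y : {x : V // x ≠ v}), H.Adj x y ↔ G.Adj x.1 y.1 := by
    intro x y; rw [hHdef]; exact SimpleGraph.comap_adj
  -- counting lemma
  have hcount : ∀ (u : V) (hu : u ≠ v) (a : Fin 9),
      ((H.neighborFinset ⟨u, hu⟩).filter fun w => c w = a).card
        = ((G.neighborFinset u).filter fun w => w ≠ v ∧ c' w = a).card := by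
    intro u hu a
    refine Finset.card_bij' (fun w _ => w.1) (fun w hw => ⟨w, ?_⟩) ?_ ?_ ?_ ?_
    · exact (Finset.mem_filter.mp hw).2.1
    · intro w hw
      rw [Finset.mem_filter] at hw ⊢
      obtain ⟨hw1, hw2⟩ := hw
      rw [SimpleGraph.mem_neighborFinset, hHadj] at hw1
      refine ⟨(G.mem_neighborFinset _ _).mpr hw1, w.2, ?_⟩
      rw [hc'ne w.1 w.2]
      exact hw2
    · intro w hw
      rw [Finset.mem_filter] at hw ⊢
      obtain ⟨hw1, hw2, hw3⟩ := hw
      rw [SimpleGraph.mem_neighborFinset] at hw1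
      refine ⟨(H.mem_neighborFinset _ _).mpr ((hHadj _ _).mpr hw1), ?_⟩
      rw [hc'ne w hw2] at hw3
      exact hw3
    · intro w _; rfl
    · intro w _; rfl
  -- degree zero in H means neighbourhood in G is {v}
  have hdeg0 : ∀ (u : V) (hu : u ≠ v), H.degree ⟨u, hu⟩ = 0 →
      ∀ x ∈ G.neighborFinset u, x = v := by
    intro u hu h0 x hx
    by_contra hxv
    rw [SimpleGraph.mem_neighborFinset] at hx
    have : H.Adj ⟨u, hu⟩ ⟨x, hxv⟩ := (hHadj _ _).mpr hx
    have := SimpleGraph.degree_pos_iff_exists_adj (G := H) ⟨u, hu⟩ |>.mpr ⟨_, this⟩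
    omega
  refine ⟨c', ?_, ?_⟩
  · -- proper
    intro x y hxy
    by_cases hx : x = v
    · have hy : y ≠ v := by rintro rfl; rw [hx] at hxy; exact G.irrefl hxy
      have hyN : y ∈ N := (G.mem_neighborFinset _ _).mpr (hx ▸ hxy)
      rw [hx, hc'v, hc'ne y hy]
      intro h
      exact hb (h ▸ hcolF y hyN)
    · by_cases hy : y = v
      · have hxN : x ∈ N := (G.mem_neighborFinset _ _).mpr (hy ▸ hxy.symm)
        rw [hy, hc'v, hc'ne x hx]
        intro h
        exact hb (h.symm ▸ hcolF x hxN)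
      · rw [hc'ne x hx, hc'ne y hy]
        exact hc1 _ _ ((hHadj ⟨x, hx⟩ ⟨y, hy⟩).mpr hxy)
  · -- odd
    intro u hdegu
    by_cases hu : u = v
    · subst hu
      by_contra hcon
      rw [SimpleGraph.IsOddAt] at hcon
      push_neg at hcon
      simp only [Nat.not_odd_iff_even, Finset.filter_congr_decidable] at hcon
      have hsum : N.card = ∑ a ∈ Finset.univ, (N.filter fun w => c' w = a).card :=
        Finset.card_eq_sum_card_fiberwise (fun x _ => Finset.mem_univ _)
      have : Even N.card := by
        rw [hsum]
        refine Finset.even_sum _ fun a _ => ?_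
        convert hcon a using 3
        rfl
      rw [hNcard] at this
      exact (Nat.not_even_iff_odd.mpr hodd) this
    · by_cases hadj : G.Adj u v
      · by_cases h0 : H.degree ⟨u, hu⟩ = 0
        · -- neighbourhood of u is exactly {v}
          refine ⟨b, ?_⟩
          have : (G.neighborFinset u).filter (fun w => c' w = b) = {v} := by
            apply Finset.eq_singleton_iff_unique_mem.mpr
            constructor
            · exact Finset.mem_filter.mpr ⟨(G.mem_neighborFinset _ _).mpr hadj, hc'v⟩
            · intro x hx
              exact hdeg0 u hu h0 x (Finset.mem_filter.mp hx).1
          have hres : Odd ((G.neighborFinset u).filter fun w => c' w = b).card := by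
            rw [this]; simp
          convert hres using 3
        · have hpos : 0 < H.degree ⟨u, hu⟩ := Nat.pos_of_ne_zero h0
          have hodd' := hc2 ⟨u, hu⟩ hpos
          set a := hodd'.choose with hadef
          have haodd := hodd'.choose_spec
          have haoc : a = oc ⟨u, hu⟩ := by
            simp only [oc, dif_pos hodd']
            exact hadef
          have haF : a ∈ F := haoc ▸ hocF u ((G.mem_neighborFinset _ _).mpr hadj.symm)
          have hab : a ≠ b := by rintro rfl; exact hb haF
          refine ⟨a, ?_⟩
          have heq : (G.neighborFinset u).filter (fun w => c' w = a)
              = (G.neighborFinset u).filter (fun w => w ≠ v ∧ c' w = a) := by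
            apply Finset.filter_congr
            intro x _
            constructor
            · intro h
              refine ⟨?_, h⟩
              rintro rfl
              rw [hc'v] at h
              exact hab h.symm
            · exact fun h => h.2
          have hres : Odd ((G.neighborFinset u).filter fun w => c' w = a).card := by
            rw [heq, ← hcount u hu a]
            convert haodd using 4
          convert hres using 3
      · -- v not a neighbour of u
        have hpos : 0 < H.degree ⟨u, hu⟩ := by
          rw [SimpleGraph.degree_pos_iff_exists_adj] at hdegu ⊢
          obtain ⟨x, hx⟩ := hdegu
          have hxv : x ≠ v := by rintro rfl; exact hadj hx
          exact ⟨⟨x, hxv⟩, (hHadj _ _).mpr hx⟩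
        obtain ⟨a, haodd⟩ := hc2 ⟨u, hu⟩ hpos
        refine ⟨a, ?_⟩
        have heq : (G.neighborFinset u).filter (fun w => c' w = a)
            = (G.neighborFinset u).filter (fun w => w ≠ v ∧ c' w = a) := by
          apply Finset.filter_congr
          intro x hx
          have hxv : x ≠ v := by
            rintro rfl
            exact hadj ((G.mem_neighborFinset _ _).mp hx)
          constructor
          · exact fun h => ⟨hxv, h⟩
          · exact fun h => h.2
        have hres : Odd ((G.neighborFinset u).filter fun w => c' w = a).card := by
          rw [heq, ← hcount u hu a]
          convert haodd using 4
        convert hres using 3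

/-- A minimal toroidal counterexample (no nice colouring, but every toroidal
graph on fewer vertices has one) has no vertex of degree 1 or 3. Toroidality
is an abstract graph property preserved by vertex deletion. -/
theorem min_counterexample_no_degree_one_or_three
    (Toroidal : ∀ (W : Type) [Fintype W] [DecidableEq W], SimpleGraph W → Prop)
    {V : Type} [Fintype V] [DecidableEq V] (G : SimpleGraph V)
    (hG : Toroidal V G)
    (hdel : ∀ (W : Type) [Fintype W] [DecidableEq W] (H : SimpleGraph W) (w : W),
      Toroidal W H → Toroidal {x : W // x ≠ w} (H.induce {x : W | x ≠ w}))
    (hno : ¬ G.HasNice)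
    (hmin : ∀ (W : Type) [Fintype W] [DecidableEq W] (H : SimpleGraph W),
      Toroidal W H → Fintype.card W < Fintype.card V → H.HasNice) :
    ∀ v : V, G.degree v ≠ 1 ∧ G.degree v ≠ 3 := by
  intro v
  have key : ∀ (h1 : Odd (G.degree v)) (h2 : G.degree v ≤ 3), False := by
    intro h1 h2
    have htor := hdel V G v hG
    have hcard : Fintype.card {x : V // x ≠ v} < Fintype.card V :=
      Fintype.card_subtype_lt (x := v) (by simp)
    have hnice := hmin _ _ htor hcard
    exact hno (extend_nice G v h1 h2 hnice)
  constructor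
  · intro h; exact key (by rw [h]; exact ⟨0, rfl⟩) (by omega)
  · intro h; exact key (by rw [h]; exact ⟨1, rfl⟩) (by omega)
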